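/- arXiv:2012.13132 — 2 statements merged into one kernel-verified Lean document; each statement's English description precedes it below -/
import Mathlib

section
/- On the whole group (P = M), B₁ ⊆_{S,M} B₂ holds if and only if C_{B₂}(g)⁻¹(0) ⊆ C_{B₁}(g)⁻¹(0) for every image g : M → ℝ≥0, where C_B = ε_B ∘ δ_B is the closing. -/
open scoped NNReal

variable {M : Type*} [AddCommGroup M]

/-- Erosion of an image `g` on pixel set `P` via structuring element `B`. -/
noncomputable def mErosion (P : Set M) (B : Finset M) (g : M → ℝ≥0) : M → ℝ≥0 :=
  fun x => sInf {y | ∃ b ∈ B, x + b ∈ P ∧ g (x + b) = y}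

/-- Dilation of an image `g` on pixel set `P` via structuring element `B`. -/
noncomputable def mDilation (P : Set M) (B : Finset M) (g : M → ℝ≥0) : M → ℝ≥0 :=
  fun x => sSup {y | ∃ b ∈ B, x - b ∈ P ∧ g (x - b) = y}

/-- Morphological opening. -/
noncomputable def mOpening (P : Set M) (B : Finset M) (g : M → ℝ≥0) : M → ℝ≥0 :=
  mDilation P B (mErosion P B g)

/-- Morphological closing. -/
noncomputable def mClosing (P : Set M) (B : Finset M) (g : M → ℝ≥0) : M → ℝ≥0 :=
  mErosion P B (mDilation P B g)

/-- Thresholding operator `τ_t`. -/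
noncomputable def mThreshold (t : ℝ≥0) (g : M → ℝ≥0) : M → ℝ≥0 :=
  fun x => if g x ≤ t then 0 else 1

/-- Positive shift inclusion condition `B₁ ⊆_{S,P,+} B₂` (without the subset requirement). -/
def shiftPos (P : Set M) (B₁ B₂ : Finset M) : Prop :=
  ∀ x ∈ P, ∀ b₂ ∈ B₂, x + b₂ ∈ P →
    ∃ b₁ ∈ B₁, x + b₁ ∈ P ∧ ∀ b ∈ B₁, b + (b₂ - b₁) ∈ B₂

/-- Negative shift inclusion condition `B₁ ⊆_{S,P,−} B₂` (without the subset requirement). -/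
def shiftNeg (P : Set M) (B₁ B₂ : Finset M) : Prop :=
  ∀ x ∈ P, ∀ b₂ ∈ B₂, x - b₂ ∈ P →
    ∃ b₁ ∈ B₁, x - b₁ ∈ P ∧ ∀ b ∈ B₁, b + (b₂ - b₁) ∈ B₂

lemma dil_zero_iff (B : Finset M) (hB : B.Nonempty) (g : M → ℝ≥0) (x : M) :
    mDilation (Set.univ : Set M) B g x = 0 ↔ ∀ b ∈ B, g (x - b) = 0 := by
  have hset : {y | ∃ b ∈ B, x - b ∈ (Set.univ : Set M) ∧ g (x - b) = y} =
      (fun b => g (x - b)) '' (B : Set M) := by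
    ext y; simp [Set.mem_image, eq_comm]
  have hfin : ((fun b => g (x - b)) '' (B : Set M)).Finite :=
    (B.finite_toSet).image _
  have hne : ((fun b => g (x - b)) '' (B : Set M)).Nonempty :=
    (hB.to_set).image _
  constructor
  · intro h b hb
    have hle : g (x - b) ≤ sSup ((fun b => g (x - b)) '' (B : Set M)) :=
      le_csSup hfin.bddAbove ⟨b, hb, rfl⟩
    simp only [mDilation, hset] at h
    rw [h] at hle
    exact le_antisymm hle zero_le
  · intro h
    simp only [mDilation, hset]
    apply le_antisymm _ zero_le
    rw [csSup_le_iff hfin.bddAbove hne]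
    rintro y ⟨b, hb, rfl⟩
    exact (h b hb).le

lemma ero_zero_iff (B : Finset M) (hB : B.Nonempty) (g : M → ℝ≥0) (x : M) :
    mErosion (Set.univ : Set M) B g x = 0 ↔ ∃ b ∈ B, g (x + b) = 0 := by
  have hset : {y | ∃ b ∈ B, x + b ∈ (Set.univ : Set M) ∧ g (x + b) = y} =
      (fun b => g (x + b)) '' (B : Set M) := by
    ext y; simp [Set.mem_image, eq_comm]
  have hfin : ((fun b => g (x + b)) '' (B : Set M)).Finite :=
    (B.finite_toSet).image _
  have hne : ((fun b => g (x + b)) '' (B : Set M)).Nonempty :=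
    (hB.to_set).image _
  constructor
  · intro h
    have hmem := hne.csInf_mem hfin
    simp only [mErosion, hset] at h
    rw [h] at hmem
    obtain ⟨b, hb, hgb⟩ := hmem
    exact ⟨b, hb, hgb⟩
  · rintro ⟨b, hb, hgb⟩
    simp only [mErosion, hset]
    apply le_antisymm _ zero_le
    calc sInf ((fun b => g (x + b)) '' (B : Set M)) ≤ g (x + b) :=
          csInf_le (OrderBot.bddBelow _) ⟨b, hb, rfl⟩
      _ = 0 := hgb

lemma closing_zero_iff (B : Finset M) (hB : B.Nonempty) (g : M → ℝ≥0) (x : M) :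
    mClosing (Set.univ : Set M) B g x = 0 ↔ ∃ b ∈ B, ∀ b' ∈ B, g (x + b - b') = 0 := by
  rw [mClosing, ero_zero_iff B hB]
  constructor
  · rintro ⟨b, hb, hd⟩
    exact ⟨b, hb, (dil_zero_iff B hB g (x + b)).mp hd⟩
  · rintro ⟨b, hb, hd⟩
    exact ⟨b, hb, (dil_zero_iff B hB g (x + b)).mpr hd⟩

/-- On the whole group, shift inclusion is equivalent to reverse nesting of closing zero sets. -/
theorem shiftIncl_iff_closing_zero_antimono (B₁ B₂ : Finset M)
    (h1 : (0 : M) ∈ B₁) (h2 : (0 : M) ∈ B₂) (hsub : B₁ ⊆ B₂) :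
    (∀ b₂ ∈ B₂, ∃ b₁ ∈ B₁, ∀ b ∈ B₁, b + (b₂ - b₁) ∈ B₂) ↔
      ∀ (g : M → ℝ≥0) (x : M),
        mClosing (Set.univ : Set M) B₂ g x = 0 → mClosing (Set.univ : Set M) B₁ g x = 0 := by
  classical
  have hB1 : B₁.Nonempty := ⟨0, h1⟩
  have hB2 : B₂.Nonempty := ⟨0, h2⟩
  constructor
  · intro h g x hx
    obtain ⟨b₂, hb₂, hz⟩ := (closing_zero_iff B₂ hB2 g x).mp hx
    obtain ⟨b₁, hb₁, hsh⟩ := h b₂ hb₂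
    refine (closing_zero_iff B₁ hB1 g x).mpr ⟨b₁, hb₁, fun b' hb' => ?_⟩
    have := hz (b' + (b₂ - b₁)) (hsh b' hb')
    have harg : x + b₂ - (b' + (b₂ - b₁)) = x + b₁ - b' := by abel
    rwa [harg] at this
  · intro h b₂ hb₂
    set g : M → ℝ≥0 := fun y => if ∃ b' ∈ B₂, y = b₂ - b' then 0 else 1 with hg
    have h2' : mClosing (Set.univ : Set M) B₂ g 0 = 0 := by
      refine (closing_zero_iff B₂ hB2 g 0).mpr ⟨b₂, hb₂, fun b' hb' => ?_⟩
      simp only [hg]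
      rw [if_pos ⟨b', hb', by abel⟩]
    obtain ⟨b₁, hb₁, hz⟩ := (closing_zero_iff B₁ hB1 g 0).mp (h g 0 h2')
    refine ⟨b₁, hb₁, fun b hb => ?_⟩
    have := hz b hb
    simp only [hg] at this
    by_cases hc : ∃ b' ∈ B₂, 0 + b₁ - b = b₂ - b'
    · obtain ⟨b', hb', heq⟩ := hc
      have h3 : b₁ - b = b₂ - b' := by rw [← heq]; abel
      have h4 : b' = b₂ - (b₁ - b) := by rw [h3]; abel
      have h5 : b + (b₂ - b₁) = b' := by rw [h4]; abel
      rwa [h5]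
    · rw [if_neg hc] at this
      exact absurd this one_ne_zero
end

section
/- (Equivalence of weak shift inclusion and the absorption property) For P ⊆ M and structuring elements B₁ ⊆ B₂: the weak negative shift inclusion B₁ ⊆_{WS,P,−} B₂ holds if and only if O_{B₁}(g)⁻¹(0) ⊆ O_{B₂}(g)⁻¹(0) for every image g : P → ℝ≥0. -/
open scoped NNReal

variable {M : Type*} [AddCommGroup M]

/-- Weak positive shift inclusion `B₁ ⊆_{WS,P,+} B₂` (without the subset requirement). -/
def weakShiftPos (P : Set M) (B₁ B₂ : Finset M) : Prop :=
  ∀ x ∈ P, ∀ b₂ ∈ B₂, x + b₂ ∈ P →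
    ∃ b₁ ∈ B₁, x + b₁ ∈ P ∧
      ∀ b₁' ∈ B₁, x + b₁ - b₁' ∈ P → ∃ b₂' ∈ B₂, x + b₂ - b₂' = x + b₁ - b₁'

/-- Weak negative shift inclusion `B₁ ⊆_{WS,P,−} B₂` (without the subset requirement). -/
def weakShiftNeg (P : Set M) (B₁ B₂ : Finset M) : Prop :=
  ∀ x ∈ P, ∀ b₂ ∈ B₂, x - b₂ ∈ P →
    ∃ b₁ ∈ B₁, x - b₁ ∈ P ∧
      ∀ b₁' ∈ B₁, x - b₁ + b₁' ∈ P → ∃ b₂' ∈ B₂, x - b₂ + b₂' = x - b₁ + b₁'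


private lemma sSup_zero_iff' {S : Set ℝ≥0} (hS : S.Finite) :
    sSup S = 0 ↔ ∀ y ∈ S, y = 0 := by
  constructor
  · intro h y hy
    have hle := le_csSup hS.bddAbove hy
    rw [h] at hle
    exact le_antisymm hle zero_le
  · intro h
    rcases S.eq_empty_or_nonempty with rfl | hne
    · simp [csSup_empty]
    · exact le_antisymm (csSup_le hne fun y hy => (h y hy).le) zero_le

private lemma erosion_zero_iff' (P : Set M) (B : Finset M) (g : M → ℝ≥0) (x : M)
    (hne : ∃ b ∈ B, x + b ∈ P) :
    mErosion P B g x = 0 ↔ ∃ b ∈ B, x + b ∈ P ∧ g (x + b) = 0 := by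
  have hfin : {y | ∃ b ∈ B, x + b ∈ P ∧ g (x + b) = y}.Finite :=
    (B.finite_toSet.image fun b => g (x + b)).subset (by
      rintro y ⟨b, hb, _, rfl⟩; exact ⟨b, hb, rfl⟩)
  have hSne : {y | ∃ b ∈ B, x + b ∈ P ∧ g (x + b) = y}.Nonempty := by
    obtain ⟨b, hb, hP⟩ := hne; exact ⟨g (x + b), b, hb, hP, rfl⟩
  simp only [mErosion]
  constructor
  · intro h
    have hm := hSne.csInf_mem hfin
    rw [h] at hm
    exact hm
  · rintro ⟨b, hb, hP, hg⟩
    exact le_antisymm (csInf_le (OrderBot.bddBelow _) ⟨b, hb, hP, hg⟩) zero_le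

private lemma opening_zero_iff' (P : Set M) (B : Finset M) (g : M → ℝ≥0) (x : M)
    (h0 : (0 : M) ∈ B) :
    mOpening P B g x = 0 ↔
      ∀ b ∈ B, x - b ∈ P → ∃ b' ∈ B, x - b + b' ∈ P ∧ g (x - b + b') = 0 := by
  have hfin : {y | ∃ b ∈ B, x - b ∈ P ∧ mErosion P B g (x - b) = y}.Finite :=
    (B.finite_toSet.image fun b => mErosion P B g (x - b)).subset (by
      rintro y ⟨b, hb, _, rfl⟩; exact ⟨b, hb, rfl⟩)
  simp only [mOpening, mDilation]
  rw [sSup_zero_iff' hfin]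
  constructor
  · intro h b hb hP
    have h0' : mErosion P B g (x - b) = 0 := h _ ⟨b, hb, hP, rfl⟩
    rw [erosion_zero_iff'] at h0'
    · exact h0'
    · exact ⟨0, h0, by simpa using hP⟩
  · rintro h y ⟨b, hb, hP, rfl⟩
    rw [erosion_zero_iff']
    · exact h b hb hP
    · exact ⟨0, h0, by simpa using hP⟩

/-- Weak negative shift inclusion is equivalent to the absorption property for openings. -/
theorem weakShiftNeg_iff_opening_zero_mono (P : Set M) (B₁ B₂ : Finset M)
    (h1 : (0 : M) ∈ B₁) (h2 : (0 : M) ∈ B₂) (hsub : B₁ ⊆ B₂) :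
    weakShiftNeg P B₁ B₂ ↔
      ∀ (g : M → ℝ≥0), ∀ x ∈ P, mOpening P B₁ g x = 0 → mOpening P B₂ g x = 0  := by
  classical
  constructor
  · intro hws g x hx h1op
    rw [opening_zero_iff' P B₁ g x h1] at h1op
    rw [opening_zero_iff' P B₂ g x h2]
    intro b₂ hb₂ hxb₂
    obtain ⟨b₁, hb₁, hxb₁, hprop⟩ := hws x hx b₂ hb₂ hxb₂
    obtain ⟨b₁', hb₁', hP, hg0⟩ := h1op b₁ hb₁ hxb₁
    obtain ⟨b₂', hb₂', heq⟩ := hprop b₁' hb₁' hP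
    exact ⟨b₂', hb₂', heq ▸ hP, heq ▸ hg0⟩
  · intro habs x hx b₂ hb₂ hxb₂
    by_contra hcon
    push_neg at hcon
    set g : M → ℝ≥0 := fun y => if ∃ b₂' ∈ B₂, y = x - b₂ + b₂' then 1 else 0 with hg
    have h1op : mOpening P B₁ g x = 0 := by
      rw [opening_zero_iff' P B₁ g x h1]
      intro b₁ hb₁ hxb₁
      obtain ⟨b₁', hb₁', hP, hne⟩ := hcon b₁ hb₁ hxb₁
      refine ⟨b₁', hb₁', hP, ?_⟩
      have : ¬ ∃ b₂' ∈ B₂, x - b₁ + b₁' = x - b₂ + b₂' := by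
        rintro ⟨b₂', hb₂', heq⟩
        exact hne b₂' hb₂' heq.symm
      simp only [hg, if_neg this]
    have h2op := habs g x hx h1op
    rw [opening_zero_iff' P B₂ g x h2] at h2op
    obtain ⟨c', hc', hPc, hg0⟩ := h2op b₂ hb₂ hxb₂
    have : g (x - b₂ + c') = 1 := by
      simp only [hg]
      exact if_pos ⟨c', hc', rfl⟩
    rw [hg0] at this
    exact one_ne_zero this.symm
end
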